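/- Let H be a complex Hilbert space, let V : H → H be a bounded isometry, let f₀ ∈ ker V*, and let m, n be nonnegative integers with m > n. Define f_t = Vᵗ f₀ for t ≥ 0 and f_t = 0 for t < 0, and set S = V + f_m⊗f_n. Then for every k ≥ 1, S^{k+1} = V^{k+1} + Σ_{j=0}^{k} f_{m+j}⊗f_{n−k+j}. -/

import Mathlib

open ContinuousLinearMap

noncomputable def rankOne {H : Type*} [NormedAddCommGroup H] [InnerProductSpace ℂ H]
    (f g : H) : H →L[ℂ] H :=
  (innerSL ℂ g).smulRight f

noncomputable def fIter {H : Type*} [NormedAddCommGroup H] [InnerProductSpace ℂ H]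
    (V : H →L[ℂ] H) (f₀ : H) (t : ℤ) : H :=
  if 0 ≤ t then (V ^ t.toNat) f₀ else 0

section Aux
variable {H : Type*} [NormedAddCommGroup H] [InnerProductSpace ℂ H]

lemma rankOne_apply' (f g h : H) : rankOne f g h = (inner ℂ g h : ℂ) • f := rfl

lemma comp_rankOne (A : H →L[ℂ] H) (f g : H) : A ∘L rankOne f g = rankOne (A f) g := by
  ext h; simp [rankOne_apply']

lemma rankOne_comp_rankOne (f g a b : H) :
    rankOne f g ∘L rankOne a b = (inner ℂ g a : ℂ) • rankOne f b := by
  ext h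
  simp [rankOne_apply', inner_smul_right, smul_smul, mul_comm]

variable [CompleteSpace H] (V : H →L[ℂ] H) (f₀ : H)

lemma rankOne_comp (f g : H) (A : H →L[ℂ] H) :
    rankOne f g ∘L A = rankOne f (adjoint A g) := by
  ext h
  simp [rankOne_apply', adjoint_inner_left]

lemma fIter_neg {t : ℤ} (ht : t < 0) : fIter V f₀ t = 0 := by
  simp [fIter, not_le.2 ht]

lemma V_fIter (t : ℤ) (ht : 0 ≤ t) : V (fIter V f₀ t) = fIter V f₀ (t + 1) := by
  have h1 : (0:ℤ) ≤ t + 1 := by omega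
  simp only [fIter, if_pos ht, if_pos h1]
  rw [show (t + 1).toNat = t.toNat + 1 by omega, pow_succ']
  rfl

variable (hV : (adjoint V) ∘L V = 1) (hf₀ : adjoint V f₀ = 0)
include hV hf₀

lemma adjoint_fIter (t : ℤ) : adjoint V (fIter V f₀ t) = fIter V f₀ (t - 1) := by
  rcases lt_trichotomy t 0 with h | h | h
  · rw [fIter_neg V f₀ h, fIter_neg V f₀ (by omega), map_zero]
  · subst h
    simpa [fIter] using hf₀
  · have h0 : (0:ℤ) ≤ t := le_of_lt h
    have h1 : (0:ℤ) ≤ t - 1 := by omega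
    simp only [fIter, if_pos h0, if_pos h1]
    rw [show t.toNat = (t-1).toNat + 1 by omega, pow_succ']
    have : adjoint V (V ((V ^ (t-1).toNat) f₀)) = (V ^ (t-1).toNat) f₀ := by
      have := congrArg (fun A => A ((V ^ (t-1).toNat) f₀)) hV
      simpa using this
    simpa using this

lemma inner_pow_zero (s t : ℕ) (h : s < t) :
    (inner ℂ ((V ^ s) f₀) ((V ^ t) f₀) : ℂ) = 0 := by
  induction s generalizing t with
  | zero =>
    obtain ⟨d, rfl⟩ : ∃ d, t = d + 1 := ⟨t - 1, by omega⟩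
    rw [pow_succ']
    have : (inner ℂ f₀ (V ((V ^ d) f₀)) : ℂ) = inner ℂ (adjoint V f₀) ((V ^ d) f₀) := by
      rw [adjoint_inner_left]
    rw [ContinuousLinearMap.mul_apply, pow_zero, ContinuousLinearMap.one_apply, this, hf₀, inner_zero_left]
  | succ s ih =>
    obtain ⟨d, rfl⟩ : ∃ d, t = d + 1 := ⟨t - 1, by omega⟩
    rw [pow_succ', pow_succ']
    have key : (inner ℂ (V ((V ^ s) f₀)) (V ((V ^ d) f₀)) : ℂ)
        = inner ℂ ((V ^ s) f₀) ((V ^ d) f₀) := by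
      rw [← adjoint_inner_left]
      congr 1
      have := congrArg (fun A => A ((V ^ s) f₀)) hV
      simpa using this
    simp only [ContinuousLinearMap.mul_apply]
    rw [key, ih d (by omega)]

lemma inner_fIter_zero (a b : ℤ) (hab : a < b) :
    (inner ℂ (fIter V f₀ a) (fIter V f₀ b) : ℂ) = 0 := by
  rcases lt_or_ge a 0 with h | h
  · rw [fIter_neg V f₀ h, inner_zero_left]
  · have hb : (0:ℤ) ≤ b := by omega
    simp only [fIter, if_pos h, if_pos hb]
    exact inner_pow_zero V f₀ hV hf₀ a.toNat b.toNat (by omega)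

lemma rankOne_fIter_comp_pow (f : H) (t : ℤ) (p : ℕ) :
    rankOne f (fIter V f₀ t) ∘L V ^ p = rankOne f (fIter V f₀ (t - p)) := by
  induction p with
  | zero => ext h; simp
  | succ p ih =>
    have : (V : H →L[ℂ] H) ^ (p + 1) = (V ^ p) ∘L V := pow_succ V p
    rw [this, ← ContinuousLinearMap.comp_assoc, ih, rankOne_comp,
      adjoint_fIter V f₀ hV hf₀]
    congr 2
    push_cast
    ring

end Aux

theorem power_formula_rankOne_perturbation'
    {H : Type*} [NormedAddCommGroup H] [InnerProductSpace ℂ H] [CompleteSpace H]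
    (V : H →L[ℂ] H) (hV : (adjoint V) ∘L V = 1)
    (f₀ : H) (hf₀ : adjoint V f₀ = 0) (m n : ℕ) (hmn : n < m) :
    ∀ k : ℕ,
      (V + rankOne (fIter V f₀ (m : ℤ)) (fIter V f₀ (n : ℤ))) ^ (k + 1)
        = V ^ (k + 1)
          + ∑ j ∈ Finset.range (k + 1),
              rankOne (fIter V f₀ ((m : ℤ) + j)) (fIter V f₀ ((n : ℤ) - k + j)) := by
  intro k
  induction k with
  | zero =>
    simp [pow_one]
  | succ k ih =>
    have hS : (V + rankOne (fIter V f₀ (m : ℤ)) (fIter V f₀ (n : ℤ))) ^ (k + 1 + 1)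
        = (V + rankOne (fIter V f₀ (m : ℤ)) (fIter V f₀ (n : ℤ)))
            * (V + rankOne (fIter V f₀ (m : ℤ)) (fIter V f₀ (n : ℤ))) ^ (k + 1) :=
      pow_succ' _ _
    rw [hS, ih, mul_add, add_mul, add_mul, Finset.mul_sum, Finset.mul_sum]
    have hVV : V * V ^ (k + 1) = V ^ (k + 1 + 1) := (pow_succ' V (k+1)).symm
    have hVT : ∀ j ∈ Finset.range (k + 1),
        V * rankOne (fIter V f₀ ((m : ℤ) + j)) (fIter V f₀ ((n : ℤ) - k + j))
          = rankOne (fIter V f₀ ((m : ℤ) + (j+1))) (fIter V f₀ ((n : ℤ) - (k+1) + (j+1))) := by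
      intro j hj
      show V ∘L _ = _
      rw [comp_rankOne, V_fIter V f₀ _ (by positivity)]
      congr 2 <;> push_cast <;> ring
    have hRV : rankOne (fIter V f₀ (m : ℤ)) (fIter V f₀ (n : ℤ)) * V ^ (k + 1)
        = rankOne (fIter V f₀ ((m : ℤ) + (0:ℕ))) (fIter V f₀ ((n : ℤ) - (k+1) + (0:ℕ))) := by
      show _ ∘L _ = _
      rw [rankOne_fIter_comp_pow V f₀ hV hf₀]
      congr 2 <;> push_cast <;> ring
    have hRT : ∀ j ∈ Finset.range (k + 1),
        rankOne (fIter V f₀ (m : ℤ)) (fIter V f₀ (n : ℤ))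
          * rankOne (fIter V f₀ ((m : ℤ) + j)) (fIter V f₀ ((n : ℤ) - k + j)) = 0 := by
      intro j hj
      show _ ∘L _ = 0
      rw [rankOne_comp_rankOne, inner_fIter_zero V f₀ hV hf₀ _ _ (by push_cast; omega), zero_smul]
    rw [Finset.sum_congr rfl hVT, Finset.sum_congr rfl hRT, Finset.sum_const_zero, add_zero, hVV, hRV]
    push_cast
    rw [Finset.sum_range_succ' (fun j => rankOne (fIter V f₀ ((m : ℤ) + j)) (fIter V f₀ ((n : ℤ) - ((k:ℤ)+1) + j))) (k+1)]
    push_cast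
    abel

/-- **Power formula.** If `V` is an isometry, `f₀ ∈ ker V*`, `m > n`, and
`S = V + f_m ⊗ f_n`, then `S^{k+1} = V^{k+1} + ∑_{j=0}^{k} f_{m+j} ⊗ f_{n-k+j}`
for every `k ≥ 1`. -/
theorem power_formula_rankOne_perturbation
    {H : Type*} [NormedAddCommGroup H] [InnerProductSpace ℂ H] [CompleteSpace H]
    (V : H →L[ℂ] H) (hV : (adjoint V) ∘L V = 1)
    (f₀ : H) (hf₀ : adjoint V f₀ = 0) (m n : ℕ) (hmn : n < m) :
    ∀ k : ℕ, 1 ≤ k →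
      (V + rankOne (fIter V f₀ (m : ℤ)) (fIter V f₀ (n : ℤ))) ^ (k + 1)
        = V ^ (k + 1)
          + ∑ j ∈ Finset.range (k + 1),
              rankOne (fIter V f₀ ((m : ℤ) + j)) (fIter V f₀ ((n : ℤ) - k + j)) := by
  intro k _
  exact power_formula_rankOne_perturbation' V hV f₀ hf₀ m n hmn k
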